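/- arXiv:1302.5991 — 11 statements merged into one kernel-verified Lean document; each statement's English description precedes it below -/
import Mathlib

section
/- If N = q^k * n^2 is an odd perfect number with q prime, q ≡ 1 (mod 4), k ≡ 1 (mod 4), and gcd(q, n) = 1, and if n < q, then k = 1. -/
/-- The sum-of-divisors function. -/
def sigma (n : ℕ) : ℕ := ∑ d ∈ n.divisors, d

/-- The abundancy index as a rational number. -/
noncomputable def Iq (x : ℕ) : ℚ := (sigma x : ℚ) / x

/-- The abundancy index as a real number. -/
noncomputable def Ir (x : ℕ) : ℝ := (sigma x : ℝ) / x

lemma sigma_eq (x : ℕ) : sigma x = ArithmeticFunction.sigma 1 x := by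
  rw [ArithmeticFunction.sigma_one_apply]; rfl

theorem stmt0 (q k n N : ℕ)
    (hq : Nat.Prime q) (hq4 : q % 4 = 1) (hk4 : k % 4 = 1)
    (hco : Nat.Coprime q n) (hN : N = q ^ k * n ^ 2)
    (hodd : Odd N) (hperf : sigma N = 2 * N) (h : n < q) :
    k = 1 := by
  have hq2 := hq.two_le
  have hq5 : 5 ≤ q := by omega
  have hn0 : 0 < n := by
    rcases Nat.eq_zero_or_pos n with h0 | h0
    · subst h0; simp [hN] at hodd
    · exact h0
  have hqk0 : 0 < q ^ k := Nat.pow_pos (by omega)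
  -- multiplicativity
  have hcop : Nat.Coprime (q ^ k) (n ^ 2) := Nat.Coprime.pow _ _ hco
  have hmul : sigma (q ^ k) * sigma (n ^ 2) = 2 * (q ^ k * n ^ 2) := by
    rw [sigma_eq, sigma_eq,
      ← ArithmeticFunction.isMultiplicative_sigma.map_mul_of_coprime hcop,
      ← sigma_eq, ← hN, hperf, hN]
  have hsig_qk : sigma (q ^ k) = ∑ j ∈ Finset.range (k + 1), q ^ j := by
    rw [sigma_eq, ArithmeticFunction.sigma_one_apply_prime_pow hq]
  have hnotdvd : ¬ q ∣ sigma (q ^ k) := by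
    rw [hsig_qk]
    intro hdvd
    rw [Finset.sum_range_succ'] at hdvd
    simp only [pow_zero] at hdvd
    have hd : q ∣ ∑ i ∈ Finset.range k, q ^ (i + 1) :=
      Finset.dvd_sum fun i _ => dvd_pow_self q (Nat.succ_ne_zero i)
    have h1 : q ∣ 1 := (Nat.dvd_add_right hd).mp hdvd
    have := Nat.eq_one_of_dvd_one h1
    omega
  have hcop2 : Nat.Coprime (q ^ k) (sigma (q ^ k)) :=
    Nat.Coprime.pow_left _ ((Nat.Prime.coprime_iff_not_dvd hq).mpr hnotdvd)
  have hdvd : q ^ k ∣ sigma (n ^ 2) := by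
    have hd : q ^ k ∣ sigma (q ^ k) * sigma (n ^ 2) := by
      rw [hmul]; exact ⟨2 * n ^ 2, by ring⟩
    exact Nat.Coprime.dvd_of_dvd_mul_left hcop2 hd
  have hsigpos : 0 < sigma (n ^ 2) := by
    have hprod : 0 < sigma (q ^ k) * sigma (n ^ 2) := by
      rw [hmul]
      have : 0 < n ^ 2 := by positivity
      positivity
    exact Nat.pos_of_ne_zero fun h0 => by simp [h0] at hprod
  have hle : q ^ k ≤ sigma (n ^ 2) := Nat.le_of_dvd hsigpos hdvd
  -- σ(q^k) > q^k
  have hgt : q ^ k < sigma (q ^ k) := by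
    rw [hsig_qk, Finset.sum_range_succ]
    have h1 : 1 ≤ ∑ j ∈ Finset.range k, q ^ j := by
      have hk1 : 0 < k := by omega
      calc 1 = q ^ 0 := by simp
        _ ≤ ∑ j ∈ Finset.range k, q ^ j :=
          Finset.single_le_sum (fun i _ => Nat.zero_le _) (Finset.mem_range.mpr hk1)
    omega
  have hsig_lt : sigma (n ^ 2) < 2 * n ^ 2 := by
    have h1 : q ^ k * sigma (n ^ 2) < q ^ k * (2 * n ^ 2) := by
      calc q ^ k * sigma (n ^ 2) < sigma (q ^ k) * sigma (n ^ 2) :=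
            Nat.mul_lt_mul_of_lt_of_le hgt le_rfl hsigpos
        _ = 2 * (q ^ k * n ^ 2) := hmul
        _ = q ^ k * (2 * n ^ 2) := by ring
    exact Nat.lt_of_mul_lt_mul_left h1
  have hlt : q ^ k < q ^ 3 := by
    calc q ^ k ≤ sigma (n ^ 2) := hle
      _ < 2 * n ^ 2 := hsig_lt
      _ ≤ 2 * q ^ 2 := by nlinarith
      _ < q ^ 3 := by nlinarith [pow_pos (show 0 < q by omega) 2, sq_nonneg q]
  have hk3 : k < 3 := (Nat.pow_lt_pow_iff_right (by omega : 1 < q)).mp hlt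
  omega
end

section
/- If N = q^k * n^2 is an odd perfect number in Eulerian form and σ(n) ≤ σ(q), then k = 1. -/
theorem stmt1 (q k n N : ℕ)
    (hq : Nat.Prime q) (hq4 : q % 4 = 1) (hk4 : k % 4 = 1)
    (hco : Nat.Coprime q n) (hN : N = q ^ k * n ^ 2)
    (hodd : Odd N) (hperf : sigma N = 2 * N) (h : sigma n ≤ sigma q) :
    k = 1 := by
  by_contra hk1
  have hk5 : 5 ≤ k := by omega
  have hq5 : 5 ≤ q := by have := hq.two_le; omega
  have hn0 : n ≠ 0 := by
    rintro rfl
    rw [hN] at hodd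
    simp at hodd
  have hcop : (q ^ k).Coprime (n ^ 2) := (hco.pow_left k).pow_right 2
  have hmul : sigma N = sigma (q ^ k) * sigma (n ^ 2) := by
    rw [hN]; exact hcop.sum_divisors_mul
  have hspow : sigma (q ^ k) = ∑ j ∈ Finset.range (k + 1), q ^ j := by
    have := ArithmeticFunction.sigma_one_apply_prime_pow (p := q) (i := k) hq
    rw [ArithmeticFunction.sigma_one_apply] at this
    exact this
  -- sigma (q^k) ≡ 1 mod q
  have hmod : sigma (q ^ k) % q = 1 := by
    rw [hspow, Finset.sum_nat_mod]
    have hcg : ∀ j ∈ Finset.range (k + 1), q ^ j % q = if j = 0 then 1 else 0 := by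
      intro j _
      rcases Nat.eq_zero_or_pos j with rfl | hj'
      · rw [pow_zero, if_pos rfl]
        exact Nat.one_mod_eq_one.mpr (by omega)
      · rw [if_neg hj'.ne', Nat.pow_mod, Nat.mod_self, Nat.zero_pow hj', Nat.zero_mod]
    rw [Finset.sum_congr rfl hcg, Finset.sum_ite_eq' (Finset.range (k + 1)) 0 (fun _ => 1)]
    rw [if_pos (Finset.mem_range.mpr (by omega))]
    exact Nat.one_mod_eq_one.mpr (by omega)
  have hndvd : ¬ q ∣ sigma (q ^ k) := fun hd => by
    have := Nat.mod_eq_zero_of_dvd hd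
    omega
  have hcop2 : (sigma (q ^ k)).Coprime (q ^ k) :=
    ((hq.coprime_iff_not_dvd.mpr hndvd).symm).pow_right k
  -- sigma (q^k) divides 2 * n^2
  have hdvd : sigma (q ^ k) ∣ 2 * n ^ 2 := by
    have h1 : sigma (q ^ k) ∣ q ^ k * (2 * n ^ 2) := by
      refine ⟨sigma (n ^ 2), ?_⟩
      rw [← hmul, hperf, hN]; ring
    exact (Nat.Coprime.dvd_of_dvd_mul_left hcop2 h1)
  have hle : sigma (q ^ k) ≤ 2 * n ^ 2 :=
    Nat.le_of_dvd (by positivity) hdvd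
  -- n ≤ sigma n
  have hnle : n ≤ sigma n :=
    Finset.single_le_sum (f := fun d => d) (fun _ _ => Nat.zero_le _)
      (Nat.mem_divisors_self n hn0)
  -- sigma q = q + 1
  have hsq : sigma q = q + 1 := by
    unfold sigma
    rw [hq.divisors]
    rw [Finset.sum_pair (by omega)]
    omega
  have hnq : n ≤ q + 1 := by omega
  -- sigma (q^k) ≥ q^k ≥ q^5
  have hge : q ^ k ≤ sigma (q ^ k) := by
    rw [hspow]
    exact Finset.single_le_sum (f := fun j => q ^ j) (fun _ _ => Nat.zero_le _)
      (Finset.self_mem_range_succ k)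
  have h5k : q ^ 5 ≤ q ^ k := Nat.pow_le_pow_right (by omega) hk5
  have hfin : 2 * n ^ 2 < q ^ 5 := by
    have h1 : 2 * n ^ 2 ≤ 2 * (q + 1) ^ 2 := by nlinarith
    have h2 : 2 * (q + 1) ^ 2 < q ^ 5 := by
      have h3 : 125 ≤ q ^ 3 := by
        calc (125 : ℕ) = 5 ^ 3 := by norm_num
        _ ≤ q ^ 3 := Nat.pow_le_pow_left hq5 3
      have h4 : 125 * q ^ 2 ≤ q ^ 3 * q ^ 2 := Nat.mul_le_mul_right _ h3
      have h5 : q ^ 3 * q ^ 2 = q ^ 5 := by ring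
      nlinarith
    omega
  omega
end

section
/- If N = q^k * n^2 is an odd perfect number in Eulerian form, then σ(n) ≠ σ(q). -/
lemma sigma_eq_sigma (m : ℕ) : sigma m = ArithmeticFunction.sigma 1 m :=
  (ArithmeticFunction.sigma_one_apply m).symm

lemma sigma_mul {m n : ℕ} (h : Nat.Coprime m n) :
    sigma (m * n) = sigma m * sigma n := by
  simp only [sigma_eq_sigma]
  exact ArithmeticFunction.isMultiplicative_sigma.map_mul_of_coprime h

lemma sigma_pp {p : ℕ} (hp : p.Prime) (e : ℕ) :
    sigma (p ^ e) = ∑ i ∈ Finset.range (e + 1), p ^ i := by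
  rw [sigma_eq_sigma]
  exact ArithmeticFunction.sigma_one_apply_prime_pow hp

theorem stmt2 (q k n N : ℕ)
    (hq : Nat.Prime q) (hq4 : q % 4 = 1) (hk4 : k % 4 = 1)
    (hco : Nat.Coprime q n) (hN : N = q ^ k * n ^ 2)
    (hodd : Odd N) (hperf : sigma N = 2 * N) :
    sigma n ≠ sigma q := by
  intro hs
  -- σ(q) = q + 1
  have hσq : sigma q = q + 1 := by
    have h1 := sigma_pp hq 1
    rw [pow_one] at h1
    rw [h1]
    simp [Finset.sum_range_succ]
    omega
  have hq2 : 2 ≤ q := hq.two_le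
  -- n ≠ 0, n ≠ 1
  have hn0 : n ≠ 0 := by
    rintro rfl
    rw [Nat.coprime_zero_right] at hco
    exact hq.ne_one hco
  have hσ1 : sigma 1 = 1 := by simp [sigma]
  have hn1 : n ≠ 1 := by
    rintro rfl
    rw [hσ1, hσq] at hs
    omega
  have hn2 : 2 ≤ n := by omega
  -- n is odd
  have hnodd : Odd n := by
    by_contra h
    rw [Nat.not_odd_iff_even] at h
    obtain ⟨t, ht⟩ := h
    have h2 : 2 ∣ N := by
      rw [hN]
      exact Dvd.dvd.mul_left (dvd_pow (⟨t, by omega⟩ : 2 ∣ n) two_ne_zero) _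
    rw [Nat.odd_iff] at hodd
    obtain ⟨c, hc⟩ := h2
    omega
  -- σ(n) ≥ n + 1
  have hσn_ge : n + 1 ≤ sigma n := by
    have hsub : ({1, n} : Finset ℕ) ⊆ n.divisors := by
      rw [Finset.insert_subset_iff, Finset.singleton_subset_iff]
      exact ⟨Nat.one_mem_divisors.mpr hn0, Nat.mem_divisors_self n hn0⟩
    have hsum : ∑ d ∈ ({1, n} : Finset ℕ), d ≤ sigma n :=
      Finset.sum_le_sum_of_subset hsub
    rw [Finset.sum_pair (by omega : (1:ℕ) ≠ n)] at hsum
    omega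
  have hσn : sigma n = q + 1 := by rw [hs, hσq]
  -- q > n
  have hqn : n < q := by
    rcases Nat.lt_or_ge n q with h | h
    · exact h
    · have hnq : n = q := by omega
      subst hnq
      rw [Nat.coprime_self] at hco
      omega
  -- σ(q^k) σ(n²) = 2 q^k n²
  have hNfact : sigma N = sigma (q ^ k) * sigma (n ^ 2) := by
    rw [hN]; exact sigma_mul (hco.pow k 2)
  have key : sigma (q ^ k) * sigma (n ^ 2) = 2 * (q ^ k * n ^ 2) := by
    rw [← hNfact, hperf, hN]
  -- q ∤ σ(q^k)
  have hqk_mod : ¬ q ∣ sigma (q ^ k) := by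
    intro hdvd
    rw [sigma_pp hq k, Finset.sum_range_succ'] at hdvd
    have h1 : q ∣ ∑ i ∈ Finset.range k, q ^ (i + 1) :=
      Finset.dvd_sum fun i _ => dvd_pow_self q (Nat.succ_ne_zero i)
    have h2 : q ∣ q ^ 0 := (Nat.dvd_add_right h1).mp hdvd
    rw [pow_zero] at h2
    have := Nat.dvd_one.mp h2
    omega
  -- q ∣ σ(n²)
  have hqσn2 : q ∣ sigma (n ^ 2) := by
    have hd : q ∣ sigma (q ^ k) * sigma (n ^ 2) := by
      rw [key]
      exact Dvd.dvd.mul_left ((dvd_pow_self q (by omega : k ≠ 0)).mul_right _) 2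
    rcases (Nat.Prime.dvd_mul hq).mp hd with h | h
    · exact absurd h hqk_mod
    · exact h
  -- factor σ(n²) over prime powers, find p with q ∣ σ(p^(2a))
  have hn2ne : (n ^ 2) ≠ 0 := pow_ne_zero _ hn0
  have hfact : sigma (n ^ 2) =
      (n ^ 2).factorization.prod fun p e => sigma (p ^ e) := by
    simp only [sigma_eq_sigma]
    exact ArithmeticFunction.IsMultiplicative.multiplicative_factorization _
      ArithmeticFunction.isMultiplicative_sigma hn2ne
  obtain ⟨p, hpmem, hpdvd⟩ :
      ∃ p ∈ (n ^ 2).factorization.support, q ∣ sigma (p ^ (n ^ 2).factorization p) := by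
    have h := hqσn2
    rw [hfact] at h
    exact ((hq.prime).dvd_finsuppProd_iff).mp h
  have hpprime : p.Prime := by
    rw [Nat.support_factorization] at hpmem
    exact Nat.prime_of_mem_primeFactors hpmem
  have hpn : p ∣ n := by
    rw [Nat.support_factorization] at hpmem
    exact hpprime.dvd_of_dvd_pow (Nat.dvd_of_mem_primeFactors hpmem)
  -- p is odd
  have hp3 : 3 ≤ p := by
    have h2 := hpprime.two_le
    rcases Nat.lt_or_ge p 3 with h | h
    · exfalso
      have hp2 : p = 2 := by omega
      subst hp2
      obtain ⟨c, hc⟩ := hpn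
      rw [Nat.odd_iff] at hnodd
      omega
    · exact h
  -- exponents
  set a := n.factorization p with ha_def
  have hexp : (n ^ 2).factorization p = 2 * a := by
    rw [Nat.factorization_pow, Finsupp.smul_apply, smul_eq_mul]
  have ha1 : 1 ≤ a := hpprime.factorization_pos_of_dvd hn0 hpn
  rw [hexp] at hpdvd
  -- u := σ(p^a) divides σ(n) = q + 1
  set u := sigma (p ^ a) with hu_def
  have hu_dvd : u ∣ sigma n := by
    have hself : p ^ a * (n / p ^ a) = n := Nat.ordProj_mul_ordCompl_eq_self n p
    have hcop : Nat.Coprime (p ^ a) (n / p ^ a) :=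
      Nat.Coprime.pow_left _ (Nat.coprime_ordCompl hpprime hn0)
    have h := sigma_mul hcop
    rw [hself] at h
    exact ⟨_, h⟩
  have hu_q1 : u ∣ q + 1 := hσn ▸ hu_dvd
  -- w := σ(p^(2a)) / q
  set σ2 := sigma (p ^ (2 * a)) with hσ2_def
  set w := σ2 / q with hw_def
  have hqw : q * w = σ2 := Nat.mul_div_cancel' hpdvd
  have hσ2pos : 1 ≤ σ2 := by
    have : p ^ (2 * a) ≠ 0 := pow_ne_zero _ (by omega)
    have h1 : 1 ≤ sigma (p ^ (2 * a)) := by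
      rw [sigma_pp hpprime]
      calc 1 = p ^ 0 := (pow_zero p).symm
        _ ≤ ∑ i ∈ Finset.range (2 * a + 1), p ^ i := by
            apply Finset.single_le_sum (f := fun i => p ^ i) (fun i _ => Nat.zero_le _)
            exact Finset.mem_range.mpr (by omega)
    exact h1
  have hw1 : 1 ≤ w := by
    rcases Nat.eq_zero_or_pos w with h | h
    · rw [h, Nat.mul_zero] at hqw; omega
    · exact h
  -- T := ∑_{i<a} p^i
  set T := ∑ i ∈ Finset.range a, p ^ i with hT_def
  have hE1 : u = T + p ^ a := by
    rw [hu_def, sigma_pp hpprime, Finset.sum_range_succ]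
  have hE2 : σ2 = u + p ^ (a + 1) * T := by
    rw [hσ2_def, hu_def, sigma_pp hpprime, sigma_pp hpprime]
    have h2a : 2 * a + 1 = (a + 1) + a := by omega
    rw [h2a, Finset.sum_range_add, Finset.mul_sum]
    congr 1
    apply Finset.sum_congr rfl
    intro i _
    rw [← pow_add]
  -- geometric identity in ℤ
  have hgeo : ((p : ℤ)) ^ (a + 1) = ((p : ℤ) - 1) * (u : ℤ) + 1 := by
    have h1 : (∑ i ∈ Finset.range (a + 1), (p : ℤ) ^ i) * ((p : ℤ) - 1)
        = (p : ℤ) ^ (a + 1) - 1 := geom_sum_mul _ _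
    have h2 : (u : ℤ) = ∑ i ∈ Finset.range (a + 1), (p : ℤ) ^ i := by
      rw [hu_def, sigma_pp hpprime]
      push_cast
      rfl
    rw [h2]
    linarith [h1]
  -- u ∣ T + w
  have hdvdTw : u ∣ T + w := by
    obtain ⟨z, hz⟩ := hu_q1
    have hzZ : (q : ℤ) + 1 = (u : ℤ) * (z : ℤ) := by exact_mod_cast hz
    have hE2Z : (σ2 : ℤ) = (u : ℤ) + (p : ℤ) ^ (a + 1) * (T : ℤ) := by exact_mod_cast hE2
    have hqwZ : (q : ℤ) * (w : ℤ) = (σ2 : ℤ) := by exact_mod_cast hqw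
    have hexpand : (p : ℤ) ^ (a + 1) * (T : ℤ)
        = ((p : ℤ) - 1) * (u : ℤ) * (T : ℤ) + (T : ℤ) := by
      rw [hgeo]; ring
    have hwit : (T : ℤ) + (w : ℤ)
        = (u : ℤ) * ((z : ℤ) * (w : ℤ) - 1 - ((p : ℤ) - 1) * (T : ℤ)) := by
      linear_combination (w : ℤ) * hzZ - hqwZ - hE2Z - hexpand
    have hZd : (u : ℤ) ∣ ((T : ℤ) + (w : ℤ)) := ⟨_, hwit⟩
    exact_mod_cast hZd
  have hTw_ge : u ≤ T + w := Nat.le_of_dvd (by omega) hdvdTw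
  -- w ≥ p^a
  have hw_ge : p ^ a ≤ w := by
    have h1 : T + p ^ a ≤ T + w := hE1 ▸ hTw_ge
    linarith
  -- 2 σ2 < 3 p^(2a)
  have hbound : 2 * σ2 < 3 * p ^ (2 * a) := by
    have hσ2Z : (σ2 : ℤ) = ∑ i ∈ Finset.range (2 * a + 1), (p : ℤ) ^ i := by
      rw [hσ2_def, sigma_pp hpprime]
      push_cast
      rfl
    have hgeo2 : ((σ2 : ℤ)) * ((p : ℤ) - 1) = (p : ℤ) ^ (2 * a + 1) - 1 := by
      rw [hσ2Z]; exact geom_sum_mul _ _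
    have hpZ : (3 : ℤ) ≤ (p : ℤ) := by exact_mod_cast hp3
    have hpowpos : (0 : ℤ) < (p : ℤ) ^ (2 * a) := by positivity
    have key2 : ((p : ℤ) - 1) * (3 * (p : ℤ) ^ (2 * a) - 2 * (σ2 : ℤ))
        = (p : ℤ) ^ (2 * a) * ((p : ℤ) - 3) + 2 := by
      linear_combination (-2 : ℤ) * hgeo2
    have hfac : (0:ℤ) < 3 * (p:ℤ)^(2*a) - 2*(σ2:ℤ) := by
      by_contra hle
      push_neg at hle
      have h7 : ((p:ℤ)-1) * (3 * (p:ℤ)^(2*a) - 2*(σ2:ℤ)) ≤ 0 :=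
        mul_nonpos_of_nonneg_of_nonpos (by linarith) hle
      have h8 : (0:ℤ) ≤ (p:ℤ)^(2*a) * ((p:ℤ)-3) :=
        mul_nonneg hpowpos.le (by linarith)
      linarith [key2, h7, h8]
    have hZ : 2 * (σ2 : ℤ) < 3 * (p : ℤ) ^ (2 * a) := by linarith
    exact_mod_cast hZ
  -- p^a ∣ n, hence n = p^a
  have hpa_dvd : p ^ a ∣ n := Nat.ordProj_dvd n p
  have hpa_pos : 0 < p ^ a := by positivity
  have hsq : p ^ (2 * a) = p ^ a * p ^ a := by rw [two_mul, pow_add]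
  have h2n : 2 * n < 3 * p ^ a := by
    have h1 : 2 * (n * w) < 2 * (q * w) := by
      have := Nat.mul_lt_mul_of_lt_of_le hqn (le_refl w) hw1
      omega
    have h2 : 2 * (q * w) = 2 * σ2 := by rw [hqw]
    have h3 : 2 * (n * w) < 3 * (p ^ a * p ^ a) := by
      rw [← hsq]; omega
    have h4 : 2 * (n * p ^ a) ≤ 2 * (n * w) := by
      have := Nat.mul_le_mul_left n hw_ge
      omega
    have h5 : 2 * n * p ^ a < (3 * p ^ a) * p ^ a := by
      calc 2 * n * p ^ a = 2 * (n * p ^ a) := by ring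
        _ ≤ 2 * (n * w) := h4
        _ < 3 * (p ^ a * p ^ a) := h3
        _ = (3 * p ^ a) * p ^ a := by ring
    exact lt_of_mul_lt_mul_right h5 (Nat.zero_le _)
  obtain ⟨m, hm⟩ := hpa_dvd
  have hm1 : m = 1 := by
    rcases Nat.eq_zero_or_pos m with h0 | h1
    · exfalso; rw [h0, mul_zero] at hm; exact hn0 hm
    · by_contra hne
      have hm2 : 2 ≤ m := by omega
      have hge : 4 * p ^ a ≤ 2 * n := by
        rw [hm]
        have := Nat.mul_le_mul_left (p ^ a) hm2
        omega
      linarith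
  have hnpa : n = p ^ a := by rw [hm, hm1, mul_one]
  have hq_pa : p ^ a < q := hnpa ▸ hqn
  -- w < 2 p^a
  have hw_lt : w < 2 * p ^ a := by
    by_contra hge
    push_neg at hge
    have h1 : (p ^ a + 1) * (2 * p ^ a) ≤ q * w :=
      Nat.mul_le_mul (by omega) hge
    have h2 : 2 * (q * w) < 3 * (p ^ a * p ^ a) := by
      rw [hqw, ← hsq]; omega
    have h1' : 2 * (p ^ a * p ^ a) + 2 * p ^ a ≤ q * w := by
      calc 2 * (p ^ a * p ^ a) + 2 * p ^ a = (p ^ a + 1) * (2 * p ^ a) := by ring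
        _ ≤ q * w := h1
    linarith [h1', h2, hpa_pos]
  -- T + w < 2u and so T + w = u
  have hlt2u : T + w < 2 * u := by
    rw [hE1]; linarith
  have hequ : T + w = u := by
    obtain ⟨c, hc⟩ := hdvdTw
    have hu1 : 1 ≤ u := by rw [hE1]; linarith [hpa_pos]
    rcases c with _ | c
    · rw [mul_zero] at hc; omega
    · rcases c with _ | c
      · rw [hc]; simp
      · exfalso
        have hmul : u * 2 ≤ u * (c + 1 + 1) := Nat.mul_le_mul_left _ (by omega)
        rw [hc] at hlt2u
        omega
  have hwpa : w = p ^ a := by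
    have h1 : T + w = T + p ^ a := by rw [hequ, hE1]
    omega
  -- p ∣ σ2, but σ2 ≡ 1 mod p
  have hpσ2 : p ∣ σ2 := by
    rw [← hqw, hwpa]
    exact Dvd.dvd.mul_left (dvd_pow_self p (by omega : a ≠ 0)) q
  have hone : p ∣ 1 := by
    have hsplit : σ2 = (∑ i ∈ Finset.range (2 * a), p ^ (i + 1)) + 1 := by
      rw [hσ2_def, sigma_pp hpprime, Finset.sum_range_succ']
      simp
    have hds : p ∣ ∑ i ∈ Finset.range (2 * a), p ^ (i + 1) :=
      Finset.dvd_sum fun i _ => dvd_pow_self p (Nat.succ_ne_zero i)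
    rw [hsplit] at hpσ2
    exact (Nat.dvd_add_right hds).mp hpσ2
  have := Nat.le_of_dvd one_pos hone
  omega
end

section
/- If N = q^k * n^2 is an odd perfect number in Eulerian form, then σ(n) ≠ q. -/
lemma sigma_eq_arith (n : ℕ) : sigma n = ArithmeticFunction.sigma 1 n := by
  rw [ArithmeticFunction.sigma_one_apply]; rfl

lemma sigma_mul_s3 {a b : ℕ} (h : a.Coprime b) : sigma (a * b) = sigma a * sigma b := by
  simp only [sigma_eq_arith]
  exact ArithmeticFunction.isMultiplicative_sigma.map_mul_of_coprime h

lemma sigma_prime_pow {p : ℕ} (hp : p.Prime) (i : ℕ) :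
    sigma (p ^ i) = ∑ j ∈ Finset.range (i + 1), p ^ j := by
  rw [sigma_eq_arith, ArithmeticFunction.sigma_one_apply_prime_pow hp]

lemma le_sigma {x : ℕ} (hx : x ≠ 0) : x ≤ sigma x :=
  Finset.single_le_sum (fun i _ => Nat.zero_le i) (Nat.mem_divisors_self x hx)

lemma sigma_eq_one {x : ℕ} (h : sigma x = 1) : x = 1 := by
  rcases Nat.eq_zero_or_pos x with rfl | hx
  · simp [sigma] at h
  · have := le_sigma hx.ne'
    omega

theorem stmt3 (q k n N : ℕ)
    (hq : Nat.Prime q) (hq4 : q % 4 = 1) (hk4 : k % 4 = 1)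
    (hco : Nat.Coprime q n) (hN : N = q ^ k * n ^ 2)
    (hodd : Odd N) (hperf : sigma N = 2 * N) :
    sigma n ≠ q := by
  intro hs
  have hq0 : q ≠ 0 := hq.ne_zero
  have hn0 : n ≠ 0 := by
    rintro rfl
    simp [sigma] at hs
    exact hq0 hs.symm
  have hn1 : n ≠ 1 := by
    rintro rfl
    simp [sigma] at hs
    exact hq.one_lt.ne' hs.symm
  -- n is a prime power p ^ a
  set p := n.minFac with hpdef
  have hp : p.Prime := Nat.minFac_prime hn1
  set a := n.factorization p with hadef
  have ha : 1 ≤ a := hp.factorization_pos_of_dvd hn0 (Nat.minFac_dvd n)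
  have hdecomp : p ^ a * (n / p ^ a) = n := Nat.ordProj_mul_ordCompl_eq_self n p
  have hcop : (p ^ a).Coprime (n / p ^ a) :=
    Nat.Coprime.pow_left _ (Nat.coprime_ordCompl hp hn0)
  have hsplit : sigma (p ^ a) * sigma (n / p ^ a) = q := by
    rw [← sigma_mul_s3 hcop, hdecomp, hs]
  have hppa1 : sigma (p ^ a) ≠ 1 := by
    intro h1
    have := sigma_eq_one h1
    have : (2:ℕ) ≤ p ^ a := by
      calc (2:ℕ) ≤ p := hp.two_le
      _ ≤ p ^ a := Nat.le_self_pow (by omega : a ≠ 0) p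
    omega
  have hm1 : n / p ^ a = 1 := by
    have hdvd : sigma (n / p ^ a) ∣ q := Dvd.intro_left _ hsplit
    rcases (Nat.Prime.eq_one_or_self_of_dvd hq _ hdvd) with h | h
    · exact sigma_eq_one h
    · exfalso
      rw [h] at hsplit
      have : sigma (p ^ a) = 1 :=
        Nat.eq_of_mul_eq_mul_right hq.pos (by rw [one_mul]; exact hsplit)
      exact hppa1 this
  have hn : n = p ^ a := by
    rw [← hdecomp, hm1, mul_one]
  -- q divides sigma (n ^ 2)
  have hk1 : 1 ≤ k := by omega
  have hcop2 : (q ^ k).Coprime (n ^ 2) := hco.pow k 2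
  have hperf' : sigma (q ^ k) * sigma (n ^ 2) = 2 * (q ^ k * n ^ 2) := by
    rw [← sigma_mul_s3 hcop2, ← hN, hperf, hN]
  have hqsig : ¬ q ∣ sigma (q ^ k) := by
    intro hdvd
    have h0 : ((sigma (q ^ k) : ℕ) : ZMod q) = 0 := by
      rw [ZMod.natCast_eq_zero_iff]; exact hdvd
    rw [sigma_prime_pow hq k] at h0
    push_cast at h0
    rw [Finset.sum_range_succ'] at h0
    simp [ZMod.natCast_self] at h0
    haveI : Fact (1 < q) := ⟨hq.one_lt⟩
    exact one_ne_zero h0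
  have hqdvd : q ∣ sigma (n ^ 2) := by
    have h1 : q ∣ sigma (q ^ k) * sigma (n ^ 2) := by
      rw [hperf']
      exact Dvd.dvd.mul_left (dvd_mul_of_dvd_left (dvd_pow_self q (by omega : k ≠ 0)) _) 2
    exact (hq.dvd_mul.mp h1).resolve_left hqsig
  -- pass to ZMod q
  haveI : Fact q.Prime := ⟨hq⟩
  set x : ZMod q := (p : ZMod q) with hxdef
  have S1 : (∑ i ∈ Finset.range (a + 1), x ^ i) = 0 := by
    have : ((sigma (p ^ a) : ℕ) : ZMod q) = 0 := by
      rw [hn] at hs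
      rw [hs, ZMod.natCast_self]
    rw [sigma_prime_pow hp a] at this
    push_cast at this
    exact this
  have S2 : (∑ i ∈ Finset.range (2 * a + 1), x ^ i) = 0 := by
    have h2 : q ∣ sigma (p ^ (2 * a)) := by
      rw [hn] at hqdvd
      rwa [← pow_mul, mul_comm a 2] at hqdvd
    have : ((sigma (p ^ (2 * a)) : ℕ) : ZMod q) = 0 := by
      rw [ZMod.natCast_eq_zero_iff]; exact h2
    rw [sigma_prime_pow hp (2 * a)] at this
    push_cast at this
    exact this
  have E1 : x ^ (a + 1) = 1 := by
    have := geom_sum_mul x (a + 1)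
    rw [S1, zero_mul] at this
    have h := this.symm
    rw [sub_eq_zero] at h
    exact h
  have E2 : x ^ (2 * a + 1) = 1 := by
    have := geom_sum_mul x (2 * a + 1)
    rw [S2, zero_mul] at this
    have h := this.symm
    rw [sub_eq_zero] at h
    exact h
  have hx1 : x = 1 := by
    have h1 : x ^ (2 * a + 2) = 1 := by
      have : x ^ (2 * a + 2) = (x ^ (a + 1)) ^ 2 := by ring
      rw [this, E1, one_pow]
    have h2 : x ^ (2 * a + 2) = x := by
      have : x ^ (2 * a + 2) = x ^ (2 * a + 1) * x := by ring
      rw [this, E2, one_mul]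
    rw [h2] at h1
    exact h1
  have hfin : ((a + 1 : ℕ) : ZMod q) = 0 := by
    have := S1
    rw [hx1] at this
    simp at this
    push_cast
    simpa using this
  have hqle : q ∣ a + 1 := by
    rwa [ZMod.natCast_eq_zero_iff] at hfin
  have hqle' : q ≤ a + 1 := Nat.le_of_dvd (by omega) hqle
  -- size contradiction: q = sigma (p ^ a) ≥ p ^ a + 1 ≥ a + 2
  have hbig : a + 2 ≤ q := by
    have h1 : sigma (p ^ a) = q := by rw [← hs, hn]
    rw [sigma_prime_pow hp a, Finset.sum_range_succ] at h1
    have hterm : 1 ≤ ∑ j ∈ Finset.range a, p ^ j := by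
      have := Finset.single_le_sum (f := fun j => p ^ j) (fun i _ => Nat.zero_le _)
        (Finset.mem_range.mpr ha)
      simpa using this
    have hpa : a + 1 ≤ p ^ a := by
      calc a + 1 ≤ 2 ^ a := Nat.lt_two_pow_self (n := a)
      _ ≤ p ^ a := Nat.pow_le_pow_left hp.two_le a
    omega
  omega
end

section
/- If N = q^k * n^2 is an odd perfect number in Eulerian form, then q·σ(q) ≠ n·σ(n). -/
lemma sigma_mul_of_coprime {m n : ℕ} (h : m.Coprime n) :
    sigma (m * n) = sigma m * sigma n := Nat.Coprime.sum_divisors_mul h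

lemma le_sigma_self {n : ℕ} (hn : n ≠ 0) : n ≤ sigma n := by
  unfold sigma
  exact Finset.single_le_sum (fun d _ => Nat.zero_le d) (Nat.mem_divisors_self n hn)

lemma sigma_prime_pow_gt {p k : ℕ} (hp : p.Prime) (hk : k ≠ 0) :
    p ^ k + 1 ≤ sigma (p ^ k) := by
  unfold sigma
  have h1 : ({p ^ k, 1} : Finset ℕ) ⊆ (p ^ k).divisors := by
    intro d hd
    simp only [Finset.mem_insert, Finset.mem_singleton] at hd
    rcases hd with rfl | rfl
    · exact Nat.mem_divisors_self _ (pow_ne_zero _ hp.pos.ne')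
    · simp [Nat.one_mem_divisors, pow_ne_zero _ hp.pos.ne', hp.ne_zero]
  calc p ^ k + 1 = ∑ d ∈ ({p ^ k, 1} : Finset ℕ), d := by
        rw [Finset.sum_pair]
        exact fun h => by
          have := hp.one_lt
          have : 1 < p ^ k := Nat.one_lt_pow hk hp.one_lt
          omega
    _ ≤ ∑ d ∈ (p ^ k).divisors, d :=
        Finset.sum_le_sum_of_subset h1

lemma mul_sigma_le_sigma_sq {n : ℕ} (hn : n ≠ 0) : n * sigma n ≤ sigma (n ^ 2) := by
  unfold sigma
  rw [Finset.mul_sum]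
  have hinj : Set.InjOn (fun d => n * d) n.divisors := by
    intro a _ b _ h
    exact Nat.eq_of_mul_eq_mul_left (Nat.pos_of_ne_zero hn) h
  have himg : ∑ i ∈ n.divisors, n * i = ∑ d ∈ n.divisors.image (n * ·), d :=
    (Finset.sum_image (f := fun x => x) (fun a ha b hb h => hinj ha hb h)).symm
  rw [himg]
  apply Finset.sum_le_sum_of_subset
  intro d hd
  simp only [Finset.mem_image] at hd
  obtain ⟨a, ha, rfl⟩ := hd
  have := (Nat.mem_divisors.mp ha).1
  exact Nat.mem_divisors.mpr ⟨by rw [sq]; exact mul_dvd_mul_left n this, pow_ne_zero _ hn⟩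

theorem stmt7 (q k n N : ℕ)
    (hq : Nat.Prime q) (hq4 : q % 4 = 1) (hk4 : k % 4 = 1)
    (hco : Nat.Coprime q n) (hN : N = q ^ k * n ^ 2)
    (hodd : Odd N) (hperf : sigma N = 2 * N) :
    q * sigma q ≠ n * sigma n := by
  intro heq
  have hk0 : k ≠ 0 := by omega
  have hN0 : N ≠ 0 := by rintro rfl; exact (Nat.not_odd_iff_even.mpr Even.zero) hodd
  have hn0 : n ≠ 0 := by rintro rfl; simp at hN; omega
  -- σ(q) = q + 1
  have hsq : sigma q = q + 1 := by
    unfold sigma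
    rw [hq.divisors, Finset.sum_pair hq.one_lt.ne]
    omega
  -- σ(n²) < 2 n²
  have hcop2 : Nat.Coprime (q ^ k) (n ^ 2) := (hco.pow_left k).pow_right 2
  have hmul : sigma (q ^ k) * sigma (n ^ 2) = 2 * (q ^ k * n ^ 2) := by
    rw [← sigma_mul_of_coprime hcop2, ← hN, hperf, hN]
  have hqk : q ^ k + 1 ≤ sigma (q ^ k) := sigma_prime_pow_gt hq hk0
  have hsqn2pos : 0 < sigma (n ^ 2) := by
    have := le_sigma_self (pow_ne_zero 2 hn0)
    have : 0 < n ^ 2 := Nat.pow_pos (Nat.pos_of_ne_zero hn0)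
    omega
  have hlt : sigma (n ^ 2) < 2 * n ^ 2 := by
    by_contra hge
    push_neg at hge
    have h1 : (q ^ k + 1) * sigma (n ^ 2) ≤ 2 * (q ^ k * n ^ 2) := by
      rw [← hmul]; exact Nat.mul_le_mul_right _ hqk
    nlinarith [(Nat.pow_pos hq.pos : 0 < q ^ k)]
  -- σ(n) < 2 n
  have hsn_lt : sigma n < 2 * n := by
    have h1 : n * sigma n ≤ sigma (n ^ 2) := mul_sigma_le_sigma_sq hn0
    have h2 : n * sigma n < 2 * n ^ 2 := lt_of_le_of_lt h1 hlt
    have : n * sigma n < n * (2 * n) := by nlinarith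
    exact Nat.lt_of_mul_lt_mul_left this
  have hsn_ge : n ≤ sigma n := le_sigma_self hn0
  -- q ∣ σ(n)
  have hqdvd : q ∣ sigma n := by
    have h : q ∣ sigma n * n := ⟨sigma q, by rw [mul_comm (sigma n) n, ← heq]⟩
    exact Nat.Coprime.dvd_of_dvd_mul_right hco h
  obtain ⟨t, ht⟩ := hqdvd
  have ht1 : 1 ≤ t := by
    rcases Nat.eq_zero_or_pos t with rfl | h
    · omega
    · exact h
  -- n * t = q + 1
  have hnt : n * t = q + 1 := by
    have : q * (n * t) = q * (q + 1) := by
      rw [hsq] at heq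
      calc q * (n * t) = n * (q * t) := by ring
        _ = n * sigma n := by rw [ht]
        _ = q * (q + 1) := heq.symm
    exact Nat.eq_of_mul_eq_mul_left hq.pos this
  rcases Nat.lt_or_ge t 2 with h2 | h2
  · -- t = 1
    have : t = 1 := by omega
    subst this
    rw [mul_one] at hnt
    -- σ(n) = q = n - 1 < n
    rw [ht, mul_one] at hsn_ge
    omega
  · -- t ≥ 2: σ(n) = q*t = (n*t-1)*t ≥ 4n - 2, but σ(n) < 2n
    have key : sigma n + t = n * t * t := by
      calc sigma n + t = (q + 1) * t := by rw [ht]; ring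
        _ = n * t * t := by rw [← hnt]
    have hn1 : 1 ≤ n := Nat.pos_of_ne_zero hn0
    have h4 : 2 * (n * t) ≤ n * t * t := by
      calc 2 * (n * t) = n * t * 2 := by ring
        _ ≤ n * t * t := Nat.mul_le_mul_left _ h2
    have h5 : 2 * n ≤ n * t := by
      calc 2 * n = n * 2 := by ring
        _ ≤ n * t := Nat.mul_le_mul_left _ h2
    have h6 : t ≤ n * t := Nat.le_mul_of_pos_left _ (Nat.pos_of_ne_zero hn0)
    -- 2nt ≤ σ(n) + t < 2n + t ≤ nt + nt
    omega
end

section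
/- If N = q^k * n^2 is an odd perfect number in Eulerian form with k = 1, then 1 < I(q) ≤ 6/5 < √(5/3) < I(n) < 2, where I(x) = σ(x)/x. -/
lemma Iq_eq_sum (x : ℕ) (hx : x ≠ 0) :
    Iq x = ∑ d ∈ x.divisors, ((d : ℚ))⁻¹ := by
  have h : (sigma x : ℚ) = ∑ d ∈ x.divisors, (x : ℚ) / d := by
    have h0 : ∑ d ∈ x.divisors, ((x / d : ℕ) : ℚ) = ∑ d ∈ x.divisors, ((d : ℕ) : ℚ) :=
      Nat.sum_div_divisors x (fun d => ((d : ℕ) : ℚ))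
    rw [sigma]
    push_cast
    rw [← h0]
    refine Finset.sum_congr rfl fun d hd => ?_
    have hd0 : (d : ℚ) ≠ 0 := by
      have := Nat.pos_of_mem_divisors hd
      positivity
    exact Nat.cast_div (Nat.dvd_of_mem_divisors hd) hd0
  rw [Iq, h, Finset.sum_div]
  refine Finset.sum_congr rfl fun d hd => ?_
  rw [div_div, mul_comm, ← div_div]
  rw [div_self (by exact_mod_cast hx)]
  rw [one_div]

lemma divisors_subset_sq {n : ℕ} (hn : n ≠ 0) : n.divisors ⊆ (n ^ 2).divisors := by
  intro d hd
  rw [Nat.mem_divisors] at hd ⊢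
  exact ⟨hd.1.trans (dvd_pow_self n two_ne_zero), pow_ne_zero 2 hn⟩

lemma Iq_le_Iq_sq {n : ℕ} (hn : n ≠ 0) : Iq n ≤ Iq (n ^ 2) := by
  rw [Iq_eq_sum n hn, Iq_eq_sum (n ^ 2) (pow_ne_zero 2 hn)]
  refine Finset.sum_le_sum_of_subset_of_nonneg (divisors_subset_sq hn) ?_
  intro d _ _
  positivity

lemma Iq_sq_lt {n : ℕ} (hn : 2 ≤ n) : Iq (n ^ 2) < Iq n ^ 2 := by
  have hn0 : n ≠ 0 := by omega
  rw [Iq_eq_sum n hn0, Iq_eq_sum (n ^ 2) (pow_ne_zero 2 hn0),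
    pow_two (∑ d ∈ n.divisors, ((d : ℚ))⁻¹), Finset.sum_mul_sum, ← Finset.sum_product']
  set i : ℕ → ℕ × ℕ := fun e => (Nat.gcd e n, e / Nat.gcd e n) with hi
  have hinj : Set.InjOn i (n ^ 2).divisors := by
    intro a ha b hb hab
    have ha' : Nat.gcd a n ∣ a := Nat.gcd_dvd_left a n
    have hb' : Nat.gcd b n ∣ b := Nat.gcd_dvd_left b n
    have h1 : Nat.gcd a n * (a / Nat.gcd a n) = a := Nat.mul_div_cancel' ha'
    have h2 : Nat.gcd b n * (b / Nat.gcd b n) = b := Nat.mul_div_cancel' hb'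
    have e1 : Nat.gcd a n = Nat.gcd b n := congrArg Prod.fst hab
    have e2 : a / Nat.gcd a n = b / Nat.gcd b n := congrArg Prod.snd hab
    rw [← h1, ← h2, e2, e1]
  have hmaps : ∀ e ∈ (n ^ 2).divisors, i e ∈ n.divisors ×ˢ n.divisors := by
    intro e he
    rw [Nat.mem_divisors] at he
    have hg0 : 0 < Nat.gcd e n := Nat.gcd_pos_of_pos_right e (by omega)
    have hdvd : e / Nat.gcd e n ∣ n := by
      have hcop : Nat.Coprime (e / Nat.gcd e n) (n / Nat.gcd e n) :=
        Nat.coprime_div_gcd_div_gcd hg0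
      have h1 : e / Nat.gcd e n ∣ n ^ 2 / Nat.gcd e n := by
        obtain ⟨m, hm⟩ := he.1
        refine ⟨m, ?_⟩
        have he' : e / Nat.gcd e n * Nat.gcd e n = e := Nat.div_mul_cancel (Nat.gcd_dvd_left e n)
        apply Nat.div_eq_of_eq_mul_left hg0
        rw [hm]
        calc e * m = e / Nat.gcd e n * Nat.gcd e n * m := by rw [he']
          _ = e / Nat.gcd e n * m * Nat.gcd e n := by ring
      have h2 : n ^ 2 / Nat.gcd e n = n * (n / Nat.gcd e n) := by
        rw [sq, Nat.mul_div_assoc n (Nat.gcd_dvd_right e n)]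
      rw [h2] at h1
      exact (Nat.Coprime.dvd_of_dvd_mul_right hcop h1)
    rw [Finset.mem_product, Nat.mem_divisors, Nat.mem_divisors]
    exact ⟨⟨Nat.gcd_dvd_right e n, hn0⟩, hdvd, hn0⟩
  have himg : ∀ e ∈ (n ^ 2).divisors, ((e : ℚ))⁻¹ = ((i e).1 * (i e).2 : ℚ)⁻¹ := by
    intro e he
    have h1 : Nat.gcd e n * (e / Nat.gcd e n) = e := Nat.mul_div_cancel' (Nat.gcd_dvd_left e n)
    rw [hi]
    simp only
    rw [← Nat.cast_mul, h1]
  calc ∑ e ∈ (n ^ 2).divisors, ((e : ℚ))⁻¹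
      = ∑ e ∈ (n ^ 2).divisors, (((i e).1 : ℚ) * (i e).2)⁻¹ := by
        refine Finset.sum_congr rfl fun e he => ?_
        rw [himg e he]
    _ = ∑ p ∈ (n ^ 2).divisors.image i, ((p.1 : ℚ) * p.2)⁻¹ := by
        rw [Finset.sum_image]
        intro a ha b hb hab
        exact hinj ha hb hab
    _ < ∑ p ∈ n.divisors ×ˢ n.divisors, ((p.1 : ℚ) * p.2)⁻¹ := by
        refine Finset.sum_lt_sum_of_subset ?_ (i := (1, n)) ?_ ?_ ?_ ?_
        · intro p hp
          rw [Finset.mem_image] at hp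
          obtain ⟨e, he, rfl⟩ := hp
          exact hmaps e he
        · rw [Finset.mem_product, Nat.mem_divisors, Nat.mem_divisors]
          exact ⟨⟨one_dvd n, hn0⟩, dvd_refl n, hn0⟩
        · rw [Finset.mem_image]
          rintro ⟨e, he, hie⟩
          have h1 : Nat.gcd e n = 1 := congrArg Prod.fst hie
          have h2 : e / Nat.gcd e n = n := congrArg Prod.snd hie
          rw [h1, Nat.div_one] at h2
          subst h2
          rw [Nat.gcd_self] at h1
          omega
        · simp only
          have : (0 : ℚ) < (1 : ℕ) * (n : ℕ) := by
            push_cast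
            positivity
          positivity
        · intro j _ _
          positivity
    _ = ∑ p ∈ n.divisors ×ˢ n.divisors, ((p.1 : ℚ))⁻¹ * ((p.2 : ℚ))⁻¹ := by
        refine Finset.sum_congr rfl fun p _ => ?_
        rw [mul_inv]

theorem stmt8 (q k n N : ℕ)
    (hq : Nat.Prime q) (hq4 : q % 4 = 1) (hk4 : k % 4 = 1)
    (hco : Nat.Coprime q n) (hN : N = q ^ k * n ^ 2)
    (hodd : Odd N) (hperf : sigma N = 2 * N) (hk : k = 1) :
    1 < Ir q ∧ Ir q ≤ 6 / 5 ∧ (6 : ℝ) / 5 < Real.sqrt (5 / 3) ∧ Real.sqrt (5 / 3) < Ir n ∧ Ir n < 2 := by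
  subst hk
  rw [pow_one] at hN
  subst hN
  -- basic facts
  have hn0 : n ≠ 0 := by
    rintro rfl
    simp at hodd
  have hq5 : 5 ≤ q := by
    have h2 := hq.two_le
    omega
  -- sigma of prime
  have hsq : sigma q = q + 1 := by
    rw [sigma, hq.divisors]
    simp [Finset.sum_pair (by omega : 1 ≠ q)]
    omega
  -- multiplicativity
  have hcop2 : Nat.Coprime q (n ^ 2) := hco.pow_right 2
  have hmul : sigma (q * n ^ 2) = sigma q * sigma (n ^ 2) := by
    simpa [sigma] using hcop2.sum_divisors_mul
  have hkey : (q + 1) * sigma (n ^ 2) = 2 * (q * n ^ 2) := by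
    rw [← hsq, ← hmul, hperf]
  -- n ≥ 2
  have hn2 : 2 ≤ n := by
    by_contra h
    have : n = 1 := by omega
    subst this
    simp [sigma] at hkey
    omega
  -- rational abundancy values
  have hq0 : (q : ℚ) ≠ 0 := by positivity
  have hIqq : Iq q = (q + 1) / q := by
    rw [Iq, hsq]; push_cast; ring
  have hIqn2 : Iq (n ^ 2) = 2 * q / (q + 1) := by
    have hn2Q : ((n : ℚ) ^ 2) ≠ 0 := by positivity
    have hkeyQ : ((q : ℚ) + 1) * (sigma (n ^ 2) : ℚ) = 2 * (q * n ^ 2) := by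
      exact_mod_cast congrArg (Nat.cast : ℕ → ℚ) hkey
    rw [Iq]
    push_cast
    rw [div_eq_div_iff (by positivity) (by positivity)]
    linarith [hkeyQ]
  -- abundancy index facts in ℚ
  have h1 : 1 < Iq q := by
    rw [hIqq, lt_div_iff₀ (by positivity)]
    push_cast; linarith
  have h2 : Iq q ≤ 6 / 5 := by
    rw [hIqq, div_le_div_iff₀ (by positivity) (by norm_num)]
    have : (5 : ℚ) ≤ q := by exact_mod_cast hq5
    linarith
  have h53 : (5 : ℚ) / 3 ≤ Iq (n ^ 2) := by
    rw [hIqn2, div_le_div_iff₀ (by norm_num) (by positivity)]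
    have : (5 : ℚ) ≤ q := by exact_mod_cast hq5
    linarith
  have hsqlt : (5 : ℚ) / 3 < Iq n ^ 2 := lt_of_le_of_lt h53 (Iq_sq_lt hn2)
  have hlt2 : Iq n < 2 := by
    have hle := Iq_le_Iq_sq hn0
    rw [hIqn2] at hle
    have : (2 : ℚ) * q / (q + 1) < 2 := by
      rw [div_lt_iff₀ (by positivity)]
      linarith
    linarith
  -- transfer to ℝ
  have hIr : ∀ x : ℕ, Ir x = ((Iq x : ℚ) : ℝ) := by
    intro x
    rw [Ir, Iq]
    push_cast
    ring
  have hIrn_pos : 0 ≤ Ir n := by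
    rw [Ir]; positivity
  refine ⟨?_, ?_, ?_, ?_, ?_⟩
  · rw [hIr]; exact_mod_cast h1
  · rw [hIr]
    have : ((Iq q : ℚ) : ℝ) ≤ ((6 / 5 : ℚ) : ℝ) := by exact_mod_cast h2
    simpa using this
  · rw [show ((6 : ℝ) / 5) = (6 / 5 : ℝ) by norm_num]
    rw [show ((5 : ℝ) / 3) = (5 / 3 : ℝ) by norm_num]
    have h65 : (0 : ℝ) ≤ 6 / 5 := by norm_num
    rw [← Real.sqrt_sq h65]
    apply Real.sqrt_lt_sqrt (by positivity)
    norm_num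
  · have hsq' : (5 : ℝ) / 3 < Ir n ^ 2 := by
      rw [hIr]
      have : ((5 / 3 : ℚ) : ℝ) < ((Iq n ^ 2 : ℚ) : ℝ) := by exact_mod_cast hsqlt
      simpa using this
    have hpos : 0 < Ir n := by
      nlinarith
    rw [show Real.sqrt (5 / 3) = Real.sqrt (5 / 3) from rfl]
    have := Real.sqrt_lt_sqrt (by norm_num : (0:ℝ) ≤ 5/3) hsq'
    rwa [Real.sqrt_sq hIrn_pos] at this
  · rw [hIr]
    have : ((Iq n : ℚ) : ℝ) < ((2 : ℚ) : ℝ) := by exact_mod_cast hlt2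
    simpa using this
end

section
/- If N = q^k * n^2 is an odd perfect number in Eulerian form with k = 1, then I(q) + I(n) > 3/2^(1/3), where I(x) = σ(x)/x. -/
lemma sigma_sq_le (n : ℕ) : sigma (n ^ 2) ≤ sigma n ^ 2 := by
  classical
  have key : ∀ c : ℕ, ∃ p : ℕ × ℕ,
      c ∈ (n ^ 2).divisors → (p ∈ n.divisors ×ˢ n.divisors ∧ p.1 * p.2 = c) := by
    intro c
    by_cases hc : c ∈ (n ^ 2).divisors
    · obtain ⟨hdvd, hne⟩ := Nat.mem_divisors.mp hc
      have hdvd' : c ∣ n * n := by rwa [← sq]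
      obtain ⟨d, e, hd, he, hde⟩ := exists_dvd_and_dvd_of_dvd_mul hdvd'
      have hn0 : n ≠ 0 := by
        intro h; apply hne; rw [h]; ring
      exact ⟨(d, e), fun _ => ⟨Finset.mem_product.mpr
        ⟨Nat.mem_divisors.mpr ⟨hd, hn0⟩, Nat.mem_divisors.mpr ⟨he, hn0⟩⟩, hde.symm⟩⟩
    · exact ⟨(1, 1), fun h => absurd h hc⟩
  choose F hF using key
  have h1 : sigma (n ^ 2) = ∑ c ∈ (n ^ 2).divisors, (F c).1 * (F c).2 := by
    apply Finset.sum_congr rfl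
    intro c hc
    exact ((hF c hc).2).symm
  have hinj : Set.InjOn F ((n ^ 2).divisors : Set ℕ) := by
    intro c1 h1' c2 h2' h
    have e1 := (hF c1 h1').2
    have e2 := (hF c2 h2').2
    rw [← e1, ← e2, h]
  have h2 : ∑ c ∈ (n ^ 2).divisors, (F c).1 * (F c).2
      = ∑ p ∈ (n ^ 2).divisors.image F, p.1 * p.2 := by
    rw [Finset.sum_image]
    intro x hx y hy hxy
    exact hinj hx hy hxy
  have h3 : (n ^ 2).divisors.image F ⊆ n.divisors ×ˢ n.divisors := by
    intro p hp
    obtain ⟨c, hc, rfl⟩ := Finset.mem_image.mp hp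
    exact (hF c hc).1
  have h4 : ∑ p ∈ (n ^ 2).divisors.image F, p.1 * p.2
      ≤ ∑ p ∈ n.divisors ×ˢ n.divisors, p.1 * p.2 :=
    Finset.sum_le_sum_of_subset h3
  have h5 : ∑ p ∈ n.divisors ×ˢ n.divisors, p.1 * p.2 = sigma n ^ 2 := by
    rw [Finset.sum_product]
    simp only [sigma, sq, Finset.sum_mul_sum]
  omega

set_option maxHeartbeats 1000000 in
theorem stmt11 (q k n N : ℕ)
    (hq : Nat.Prime q) (hq4 : q % 4 = 1) (hk4 : k % 4 = 1)
    (hco : Nat.Coprime q n) (hN : N = q ^ k * n ^ 2)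
    (hodd : Odd N) (hperf : sigma N = 2 * N) (hk : k = 1) :
    Ir q + Ir n > 3 / (2 : ℝ) ^ ((1 : ℝ) / 3) := by
  subst hk hN
  rw [pow_one] at hperf
  -- n ≠ 0
  have hn0 : n ≠ 0 := by
    rintro rfl
    simp at hodd
  have hq0 : 0 < q := hq.pos
  -- multiplicativity
  have hmul : sigma (q * n ^ 2) = sigma q * sigma (n ^ 2) :=
    Nat.Coprime.sum_divisors_mul (hco.pow_right 2)
  have hsq : sigma q = q + 1 := by
    rw [sigma, hq.divisors, Finset.sum_pair hq.one_lt.ne]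
    omega
  have hkey : (q + 1) * sigma (n ^ 2) = 2 * (q * n ^ 2) := by
    rw [← hsq, ← hmul, hperf]
  have hle : sigma (n ^ 2) ≤ sigma n ^ 2 := sigma_sq_le n
  have hkey2 : 2 * (q * n ^ 2) ≤ (q + 1) * sigma n ^ 2 := by
    calc 2 * (q * n ^ 2) = (q + 1) * sigma (n ^ 2) := hkey.symm
    _ ≤ (q + 1) * sigma n ^ 2 := Nat.mul_le_mul_left _ hle
  -- real side
  set r : ℝ := (2 : ℝ) ^ ((1 : ℝ) / 3) with hrdef
  have hr0 : 0 < r := Real.rpow_pos_of_pos (by norm_num) _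
  have hr3 : r ^ 3 = 2 := by
    rw [hrdef, ← Real.rpow_natCast ((2:ℝ) ^ ((1:ℝ)/3)) 3, ← Real.rpow_mul (by norm_num)]
    norm_num
  set a : ℝ := Ir q with hadef
  set b : ℝ := Ir n with hbdef
  have hqR : (0:ℝ) < q := by exact_mod_cast hq0
  have hnR : (0:ℝ) < n := by positivity
  have ha : 1 ≤ a := by
    rw [hadef, Ir, hsq]
    rw [le_div_iff₀ hqR]
    push_cast
    linarith
  have hb : 0 ≤ b := by
    rw [hbdef, Ir]
    positivity
  have hcast : (2:ℝ) * (q * n ^ 2) ≤ (q + 1) * (sigma n : ℝ) ^ 2 := by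
    exact_mod_cast hkey2
  have hab : 2 ≤ a * b ^ 2 := by
    rw [hadef, hbdef, Ir, Ir, hsq, div_pow, div_mul_div_comm]
    rw [le_div_iff₀ (by positivity)]
    push_cast
    push_cast at hcast
    nlinarith
  rw [gt_iff_lt, div_lt_iff₀ hr0]
  have h1 : (1.25:ℝ) < r := by nlinarith [sq_nonneg r, sq_nonneg (r-1.25)]
  have h2 : r < 1.26 := by nlinarith [sq_nonneg r, sq_nonneg (r-1.26)]
  nlinarith [sq_nonneg (a-1), sq_nonneg (r*b-2), sq_nonneg (b - 1.42),
    mul_nonneg hb hb, sq_nonneg (a*r-1), mul_nonneg (mul_nonneg hb hb) hb]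
end

section
/- For any prime q ≥ 5, the inequality 1 + 1/q + √(2q/(q+1)) > 3/2^(1/3) holds (strict, via the AM–GM inequality with equality case excluded). -/
theorem stmt12 (q : ℕ) (hq : Nat.Prime q) (hq5 : 5 ≤ q) :
    1 + 1 / (q : ℝ) + Real.sqrt (2 * q / (q + 1)) > 3 / (2 : ℝ) ^ ((1 : ℝ) / 3) := by
  have hx5 : (5 : ℝ) ≤ (q : ℝ) := by exact_mod_cast hq5
  set x : ℝ := (q : ℝ) with hxdef
  have hx0 : (0 : ℝ) < x := by linarith
  have hx1 : (0 : ℝ) < x + 1 := by linarith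
  set a : ℝ := 1 + 1 / x with hadef
  have ha1 : 1 < a := by
    have : 0 < 1 / x := by positivity
    simp [hadef]; linarith
  have ha2 : a ≤ 6 / 5 := by
    have : 1 / x ≤ 1 / 5 := by
      apply div_le_div_of_nonneg_left (by norm_num) (by norm_num) hx5
    simp only [hadef]; linarith
  set b : ℝ := Real.sqrt (2 * x / (x + 1)) with hbdef
  have hbnn : 0 ≤ b := Real.sqrt_nonneg _
  have hb2 : b ^ 2 = 2 * x / (x + 1) := by
    rw [hbdef, Real.sq_sqrt]; positivity
  have hab2 : a * b ^ 2 = 2 := by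
    rw [hb2, hadef]; field_simp
  -- c := 3 / 2^(1/3)
  set t : ℝ := (2 : ℝ) ^ ((1 : ℝ) / 3) with htdef
  have ht0 : 0 < t := Real.rpow_pos_of_pos (by norm_num) _
  have ht3 : t ^ 3 = 2 := by
    rw [htdef, ← Real.rpow_natCast ((2:ℝ) ^ ((1:ℝ)/3)) 3, ← Real.rpow_mul (by norm_num)]
    norm_num
  have ht1 : 1 ≤ t := by nlinarith [sq_nonneg (t - 1), sq_nonneg t]
  set c : ℝ := 3 / t with hcdef
  have hc0 : 0 < c := by positivity
  have hc3 : c ^ 3 = 27 / 2 := by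
    rw [hcdef, div_pow, ht3]; norm_num
  have hc3' : c ≤ 3 := by
    rw [hcdef]
    calc 3 / t ≤ 3 / 1 := by
          apply div_le_div_of_nonneg_left (by norm_num) (by norm_num) ht1
      _ = 3 := by norm_num
  have hca : a < c := by
    by_contra h
    push_neg at h
    have hcle : c ≤ 6 / 5 := h.trans ha2
    have := pow_le_pow_left₀ hc0.le hcle 3
    norm_num at this
    linarith
  -- key: 2 > a * (c - a)^2
  have hkey : a * (c - a) ^ 2 < 2 := by
    have h18 : a * c ^ 2 < 18 := by nlinarith
    nlinarith [mul_nonneg (sq_nonneg (3 * a - c)) (le_of_lt (by linarith : (0:ℝ) < 18 - a * c ^ 2)), sq_nonneg (3 * a - c)]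
  -- so b > c - a
  have hb2' : (c - a) ^ 2 < b ^ 2 := by
    have : a * (c - a) ^ 2 < a * b ^ 2 := by rw [hab2]; exact hkey
    exact lt_of_mul_lt_mul_left this (by linarith)
  have hbca : c - a < b := by nlinarith [sq_nonneg (b - (c - a)), sq_nonneg (b + (c - a))]
  show 1 + 1 / x + b > 3 / t
  have : a + b > c := by linarith
  simpa [hadef, hcdef] using this
end

section
/- Let N = q^k * n^2 be an odd perfect number in Eulerian form. If I(q^k) + I(n) < σ(q^k)/n + σ(n)/q^k (as rationals), then q^k < n if and only if σ(q^k) < σ(n). -/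
theorem stmt14 (q k n N : ℕ)
    (hq : Nat.Prime q) (hq4 : q % 4 = 1) (hk4 : k % 4 = 1)
    (hco : Nat.Coprime q n) (hN : N = q ^ k * n ^ 2)
    (hodd : Odd N) (hperf : sigma N = 2 * N) (h : Iq (q ^ k) + Iq n < (sigma (q ^ k) : ℚ) / n + (sigma n : ℚ) / q ^ k) :
    (q ^ k < n ↔ sigma (q ^ k) < sigma n) := by
  have hn0 : n ≠ 0 := by
    rintro rfl
    simp [hN, Nat.odd_iff] at hodd
  have ha : (0:ℚ) < ((q ^ k : ℕ) : ℚ) := by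
    exact_mod_cast pow_pos hq.pos k
  have hb : (0:ℚ) < (n : ℚ) := by exact_mod_cast Nat.pos_of_ne_zero hn0
  rw [Iq, Iq] at h
  push_cast at h ha ⊢
  have key : 0 < ((sigma (q ^ k) : ℚ) - sigma n) * ((q:ℚ) ^ k - n) := by
    rw [div_add_div _ _ (ne_of_gt ha) (ne_of_gt hb), div_add_div _ _ (ne_of_gt hb) (ne_of_gt ha),
      div_lt_div_iff₀ (by positivity) (by positivity)] at h
    rw [show (n:ℚ) * (q:ℚ)^k = (q:ℚ)^k * n by ring] at h
    have h2 := lt_of_mul_lt_mul_right h (by positivity : (0:ℚ) ≤ (q:ℚ)^k * n)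
    nlinarith [h2]
  constructor
  · intro hlt
    have hlt' : (q:ℚ) ^ k < n := by exact_mod_cast hlt
    have : ((sigma (q ^ k) : ℚ)) < sigma n := by nlinarith [key]
    exact_mod_cast this
  · intro hlt
    have hlt' : ((sigma (q ^ k) : ℚ)) < sigma n := by exact_mod_cast hlt
    have : (q:ℚ) ^ k < n := by nlinarith [key]
    exact_mod_cast this
end

section
/- Let N = q^k * n^2 be an odd perfect number in Eulerian form. If σ(q^k)/n + σ(n)/q^k < I(q^k) + I(n) (as rationals), then q^k < n if and only if σ(n) < σ(q^k). -/
theorem stmt15 (q k n N : ℕ)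
    (hq : Nat.Prime q) (hq4 : q % 4 = 1) (hk4 : k % 4 = 1)
    (hco : Nat.Coprime q n) (hN : N = q ^ k * n ^ 2)
    (hodd : Odd N) (hperf : sigma N = 2 * N) (h : (sigma (q ^ k) : ℚ) / n + (sigma n : ℚ) / q ^ k < Iq (q ^ k) + Iq n) :
    (q ^ k < n ↔ sigma n < sigma (q ^ k)) := by
  have hn : 0 < n := by
    rcases Nat.eq_zero_or_pos n with h0 | h0
    · subst h0; simp [hN, Nat.odd_iff] at hodd
    · exact h0
  have hqk : 0 < q ^ k := pow_pos hq.pos k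
  have hA : (0 : ℚ) < (q ^ k : ℕ) := by exact_mod_cast hqk
  have hB : (0 : ℚ) < (n : ℕ) := by exact_mod_cast hn
  set Sa : ℚ := (sigma (q ^ k) : ℚ)
  set Sb : ℚ := (sigma n : ℚ)
  set A : ℚ := ((q ^ k : ℕ) : ℚ)
  set B : ℚ := ((n : ℕ) : ℚ)
  have h' : Sa / B + Sb / A < Sa / A + Sb / B := by
    simpa [Iq, Sa, Sb, A, B] using h
  have key : (Sa - Sb) * (A - B) < 0 := by
    have h1 : Sa / B * (A * B) = Sa * A := by field_simp
    have h2 : Sb / A * (A * B) = Sb * B := by field_simp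
    have h3 : Sa / A * (A * B) = Sa * B := by field_simp
    have h4 : Sb / B * (A * B) = Sb * A := by field_simp
    have hAB : (0 : ℚ) < A * B := mul_pos hA hB
    nlinarith [mul_lt_mul_of_pos_right h' hAB]
  constructor
  · intro hlt
    have hAB2 : A < B := by simp only [A, B]; exact_mod_cast hlt
    have : (0 : ℚ) < Sa - Sb := by nlinarith
    have h5 : Sb < Sa := by linarith
    simp only [Sa, Sb] at h5; exact_mod_cast h5
  · intro hlt
    have : Sb < Sa := by simp only [Sa, Sb]; exact_mod_cast hlt
    have : A - B < 0 := by nlinarith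
    have h5 : A < B := by linarith
    simp only [A, B] at h5; exact_mod_cast h5
end

section
/- If N = q^k * n^2 is an odd perfect number in Eulerian form, then σ(q^k)/n + σ(n)/q^k > 2·(8/5)^(1/4) (as real numbers). -/
lemma div_gcd_dvd_of_dvd_sq {d n : ℕ} (hn : n ≠ 0) (hd : d ∣ n ^ 2) :
    d / Nat.gcd d n ∣ n := by
  have hg : 0 < Nat.gcd d n := Nat.gcd_pos_of_pos_right d (Nat.pos_of_ne_zero hn)
  have hcop : Nat.Coprime (d / Nat.gcd d n) (n / Nat.gcd d n) :=
    Nat.coprime_div_gcd_div_gcd hg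
  have h1 : d / Nat.gcd d n ∣ (n / Nat.gcd d n) * n := by
    have h2 : d ∣ n * n := by simpa [sq] using hd
    have h3 : Nat.gcd d n * (d / Nat.gcd d n) = d :=
      Nat.mul_div_cancel' (Nat.gcd_dvd_left d n)
    have h4 : Nat.gcd d n * (n / Nat.gcd d n) = n :=
      Nat.mul_div_cancel' (Nat.gcd_dvd_right d n)
    have h5 : Nat.gcd d n * (d / Nat.gcd d n) ∣ Nat.gcd d n * ((n / Nat.gcd d n) * n) := by
      rw [h3, ← mul_assoc, h4]; exact h2
    exact (mul_dvd_mul_iff_left hg.ne').mp h5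
  exact (Nat.Coprime.dvd_of_dvd_mul_left hcop h1)

lemma sigma_pp_lb {q k : ℕ} (hq : 2 ≤ q) (hk : 1 ≤ k) : q ^ k + 1 ≤ sigma (q ^ k) := by
  have hqk : 2 ≤ q ^ k := le_trans hq (Nat.le_self_pow (by omega) q)
  have hne : (1 : ℕ) ≠ q ^ k := by omega
  have hsub : ({1, q ^ k} : Finset ℕ) ⊆ (q ^ k).divisors := by
    intro x hx
    rcases Finset.mem_insert.mp hx with rfl | hx
    · exact Nat.one_mem_divisors.mpr (by positivity)
    · rw [Finset.mem_singleton] at hx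
      subst hx
      exact Nat.mem_divisors_self _ (by positivity)
  have := Finset.sum_le_sum_of_subset (f := id) hsub
  rw [Finset.sum_pair hne] at this
  simpa [sigma, add_comm] using this

theorem stmt19 (q k n N : ℕ)
    (hq : Nat.Prime q) (hq4 : q % 4 = 1) (hk4 : k % 4 = 1)
    (hco : Nat.Coprime q n) (hN : N = q ^ k * n ^ 2)
    (hodd : Odd N) (hperf : sigma N = 2 * N) :
    (sigma (q ^ k) : ℝ) / n + (sigma n : ℝ) / q ^ k > 2 * (8 / 5 : ℝ) ^ ((1 : ℝ) / 4) := by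
  have hq2 : 2 ≤ q := hq.two_le
  have hk1 : 1 ≤ k := by omega
  have hn0 : n ≠ 0 := by
    rintro rfl
    rw [hN] at hodd
    simp at hodd
  -- multiplicativity
  have hcop2 : Nat.Coprime (q ^ k) (n ^ 2) := (hco.pow_right 2).pow_left k
  have hmul : sigma (q ^ k) * sigma (n ^ 2) = 2 * (q ^ k * n ^ 2) := by
    have := Nat.Coprime.sum_divisors_mul hcop2
    rw [hN] at hperf
    simpa [sigma] using (this.symm.trans hperf)
  -- real variables
  set A : ℝ := (sigma (q ^ k) : ℝ) with hA
  set B : ℝ := (sigma n : ℝ) with hB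
  set S : ℝ := (sigma (n ^ 2) : ℝ) with hS
  set Q : ℝ := ((q : ℝ)) ^ k with hQ
  set m : ℝ := (n : ℝ) with hm
  have hQpos : 0 < Q := by positivity
  have hmpos : 0 < m := by
    rw [hm]
    exact_mod_cast Nat.pos_of_ne_zero hn0
  have hAgt : Q + 1 ≤ A := by
    have h0 := sigma_pp_lb hq2 hk1
    have h' : ((q ^ k + 1 : ℕ) : ℝ) ≤ ((sigma (q ^ k) : ℕ) : ℝ) := by exact_mod_cast h0
    rw [hA, hQ]
    push_cast at h'
    linarith
  have hBS : S ≤ B ^ 2 := by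
    have h0 := sigma_sq_le n
    rw [hS, hB]
    exact_mod_cast h0
  have hASm : A * S = 2 * (Q * m ^ 2) := by
    have : ((sigma (q ^ k) * sigma (n ^ 2) : ℕ) : ℝ) = ((2 * (q ^ k * n ^ 2) : ℕ) : ℝ) := by
      exact_mod_cast congrArg (Nat.cast : ℕ → ℝ) hmul
    push_cast at this
    rw [hA, hS, hQ, hm]
    linarith
  have hSpos : 0 ≤ S := by positivity
  have hBpos : 0 ≤ B := by positivity
  have hApos : 0 < A := by linarith
  -- product bound : (A/m * (B/Q))^2 > 2
  have hprodsq : 2 < ((A / m) * (B / Q)) ^ 2 := by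
    rw [div_mul_div_comm, div_pow, lt_div_iff₀ (by positivity)]
    have h1 : A ^ 2 * S ≤ A ^ 2 * B ^ 2 := mul_le_mul_of_nonneg_left hBS (sq_nonneg A)
    have h2 : A ^ 2 * S = A * (2 * (Q * m ^ 2)) := by
      calc A ^ 2 * S = A * (A * S) := by ring
        _ = A * (2 * (Q * m ^ 2)) := by rw [hASm]
    have h3 : Q * (2 * (Q * m ^ 2)) < A * (2 * (Q * m ^ 2)) :=
      mul_lt_mul_of_pos_right (by linarith) (by positivity)
    nlinarith [h1, h2, h3]
  have hprodpos : 0 ≤ (A / m) * (B / Q) := by positivity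
  -- sqrt(8/5) < product
  have hsqrt : Real.sqrt (8 / 5) < (A / m) * (B / Q) := by
    have h1 : Real.sqrt (8 / 5) ^ 2 = 8 / 5 := Real.sq_sqrt (by norm_num)
    have h2 : Real.sqrt (8 / 5) ^ 2 < ((A / m) * (B / Q)) ^ 2 := by
      rw [h1]; linarith
    exact lt_of_pow_lt_pow_left₀ 2 hprodpos h2
  -- target squared
  have htsq : (2 * (8 / 5 : ℝ) ^ ((1 : ℝ) / 4)) ^ 2 = 4 * Real.sqrt (8 / 5) := by
    rw [mul_pow, Real.sqrt_eq_rpow]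
    rw [← Real.rpow_natCast ((8 / 5 : ℝ) ^ ((1 : ℝ) / 4)) 2, ← Real.rpow_mul (by norm_num)]
    norm_num
  have htpos : 0 ≤ 2 * (8 / 5 : ℝ) ^ ((1 : ℝ) / 4) := by positivity
  have hsum : 0 ≤ A / m + B / Q := by positivity
  have hfinal : (2 * (8 / 5 : ℝ) ^ ((1 : ℝ) / 4)) ^ 2 < (A / m + B / Q) ^ 2 := by
    rw [htsq]
    nlinarith [sq_nonneg (A / m - B / Q)]
  exact lt_of_pow_lt_pow_left₀ 2 hsum hfinal
end
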